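/- For every n ≥ 1 and every l ∈ {1, …, n}, the component machine Mₙˡ of the n-bit register machine is minimal: every state of Mₙˡ is reachable from the initial state (0, 1), and any two distinct states of Mₙˡ have different behaviours. Consequently, Mₙˡ has exactly 2n states, all with pairwise distinct behaviour. -/

import Mathlib

/-- A Moore machine with input alphabet `I` and output alphabet `O`:
a finite set of states `Q`, a transition function `δ`, an output
function `o` and an initial state `q₀`. -/
structure Moore (I O : Type) where
  Q : Type
  [fin : Fintype Q]
  δ : Q → I → Q
  o : Q → O
  q₀ : Q

attribute [instance] Moore.fin

namespace Moore

variable {I O O₁ O₂ : Type}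

/-- The transition function extended to words: `δ(q, ε) = q`, `δ(q, aw) = δ(δ(q,a), w)`. -/
def run (M : Moore I O) (q : M.Q) : List I → M.Q
  | [] => q
  | a :: w => M.run (M.δ q a) w

/-- The behaviour of a state: `⟦q⟧(w) = o(δ(q, w))`. -/
def stateBeh (M : Moore I O) (q : M.Q) (w : List I) : O := M.o (M.run q w)

/-- The behaviour of a machine: `⟦M⟧ = ⟦q₀⟧`. -/
def beh (M : Moore I O) (w : List I) : O := M.stateBeh M.q₀ w

/-- The size of a machine: the number of its states. -/
def size (M : Moore I O) : ℕ := Fintype.card M.Q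

/-- A state is reachable if it is `δ(q₀, w)` for some word `w`. -/
def Reachable (M : Moore I O) (q : M.Q) : Prop := ∃ w : List I, M.run M.q₀ w = q

/-- A machine is minimal if all states are reachable and distinct states
have different behaviour. -/
def Minimal (M : Moore I O) : Prop :=
  (∀ q, M.Reachable q) ∧ ∀ q q' : M.Q, M.stateBeh q = M.stateBeh q' → q = q'

/-- The product of two Moore machines over the same input alphabet. -/
def prod (M₁ : Moore I O₁) (M₂ : Moore I O₂) : Moore I (O₁ × O₂) where
  Q := M₁.Q × M₂.Q
  δ := fun q a => (M₁.δ q.1 a, M₂.δ q.2 a)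
  o := fun q => (M₁.o q.1, M₂.o q.2)
  q₀ := (M₁.q₀, M₂.q₀)

/-- The first component of a machine with product outputs. -/
def comp₁ (M : Moore I (O₁ × O₂)) : Moore I O₁ :=
  { Q := M.Q, δ := M.δ, o := fun q => (M.o q).1, q₀ := M.q₀ }

/-- The second component of a machine with product outputs. -/
def comp₂ (M : Moore I (O₁ × O₂)) : Moore I O₂ :=
  { Q := M.Q, δ := M.δ, o := fun q => (M.o q).2, q₀ := M.q₀ }

end Moore

/-- The input alphabet of the `n`-bit register machine: move left, move right, flip. -/
inductive RegInput : Type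
  | L : RegInput
  | R : RegInput
  | F : RegInput

/-- The `n`-bit register machine `Mₙ`: states are a bit vector together with a head
position; `L`/`R` move the head (wrapping around), `F` flips the bit under the head;
the output is the bit vector. -/
def regMachine (n : ℕ) (hn : 0 < n) : Moore RegInput (Fin n → Bool) :=
  letI : NeZero n := ⟨hn.ne'⟩
  { Q := (Fin n → Bool) × Fin n
    δ := fun q i =>
      match i with
      | .L => (q.1, q.2 - 1)
      | .R => (q.1, q.2 + 1)
      | .F => (Function.update q.1 q.2 (!(q.1 q.2)), q.2)
    o := fun q => q.1
    q₀ := (fun _ => false, ⟨0, hn⟩) }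

/-- The `l`-th component machine `Mₙˡ` of the `n`-bit register machine: states are a
single bit together with a head position; `L`/`R` move the head (wrapping around),
`F` flips the bit only when the head is at position `l`; the output is the bit. -/
def regComponent (n : ℕ) (hn : 0 < n) (l : Fin n) : Moore RegInput Bool :=
  letI : NeZero n := ⟨hn.ne'⟩
  { Q := Bool × Fin n
    δ := fun q i =>
      match i with
      | .L => (q.1, q.2 - 1)
      | .R => (q.1, q.2 + 1)
      | .F => (if q.2 = l then !q.1 else q.1, q.2)
    o := fun q => q.1
    q₀ := (false, ⟨0, hn⟩) }


open Fin.NatCast Fin.CommRing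

section Aux

variable {n : ℕ} (hn : 0 < n) (l : Fin n)

lemma run_append {I O : Type} (M : Moore I O) (q : M.Q) (u v : List I) :
    M.run q (u ++ v) = M.run (M.run q u) v := by
  induction u generalizing q with
  | nil => rfl
  | cons a u ih => simp [Moore.run, ih]

lemma run_replicate_R (b : Bool) (k : Fin n) (m : ℕ) :
    letI : NeZero n := ⟨hn.ne'⟩
    (regComponent n hn l).run (b, k) (List.replicate m RegInput.R) = (b, k + (m : Fin n)) := by
  letI : NeZero n := ⟨hn.ne'⟩
  induction m generalizing k with
  | zero => simp [Moore.run]; rfl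
  | succ m ih =>
      rw [List.replicate_succ]
      show (regComponent n hn l).run (b, k + 1) (List.replicate m RegInput.R) = _
      rw [ih]
      congr 1
      push_cast
      ring

lemma run_F (b : Bool) (k : Fin n) :
    (regComponent n hn l).run (b, k) [RegInput.F]
      = (if k = l then !b else b, k) := rfl

end Aux

/-- Each component machine `Mₙˡ` of the `n`-bit register machine is minimal, and it
has exactly `2n` states. -/
theorem regComponent_minimal (n : ℕ) (hn : 1 ≤ n) :
    ∀ l : Fin n, (regComponent n hn l).Minimal ∧ (regComponent n hn l).size = 2 * n := by
  intro l
  letI : NeZero n := ⟨Nat.one_le_iff_ne_zero.mp hn⟩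
  refine ⟨⟨?_, ?_⟩, ?_⟩
  · rintro ⟨b, k⟩
    refine ⟨List.replicate l.val RegInput.R ++
      ((if b then [RegInput.F] else []) ++ List.replicate (k - l).val RegInput.R), ?_⟩
    have h0 : (regComponent n hn l).q₀ = ((false, ⟨0, hn⟩) : Bool × Fin n) := rfl
    rw [run_append, run_append, h0, run_replicate_R hn l]
    have hl : (⟨0, hn⟩ : Fin n) + (l.val : Fin n) = l := by
      simp [Fin.cast_val_eq_self]
    rw [hl]
    have hsub : ∀ b' : Bool,
        (regComponent n hn l).run (b', l) (List.replicate (k - l).val RegInput.R) = (b', k) := by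
      intro b'
      rw [run_replicate_R hn l, Fin.cast_val_eq_self]
      congr 1
      rw [add_comm]
      exact sub_add_cancel k l
    cases b with
    | false => exact hsub false
    | true =>
        show (regComponent n hn l).run ((regComponent n hn l).run (false, l) [RegInput.F])
          (List.replicate (k - l).val RegInput.R) = (true, k)
        rw [run_F hn l]
        simpa using hsub true
  · rintro ⟨b, k⟩ ⟨b', k'⟩ h
    have hb : b = b' := congrFun h []
    have hk : k = k' := by
      by_contra hkk
      have h2 := congrFun h (List.replicate (l - k).val RegInput.R ++ [RegInput.F])
      simp only [Moore.stateBeh] at h2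
      erw [run_append, run_append] at h2
      rw [run_replicate_R hn l, run_replicate_R hn l, Fin.cast_val_eq_self,
        run_F hn l, run_F hn l] at h2
      have e1 : k + (l - k) = l := by rw [add_comm]; exact sub_add_cancel l k
      have e2 : k' + (l - k) ≠ l := fun hc =>
        hkk (add_right_cancel (hc.trans e1.symm)).symm
      rw [if_pos e1, if_neg e2] at h2
      subst hb
      exact Bool.not_ne_self b h2
    rw [hb, hk]
  · show Fintype.card (Bool × Fin n) = 2 * n
    simp [Fintype.card_prod]
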